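/- Let B be an n×k real matrix and δ ∈ (0, 1/3), and assume the full two-sided bound: for all y, y' ∈ ℝ^k and all ordered selections r, r', (1−δ)·d((y,r),(y',r'))² ≤ ‖S_r B y − S_{r'} B y'‖² ≤ (1+δ)·d((y,r),(y',r'))². Let y̌ ∈ ℝ^k be nonzero, ř an ordered selection, and x̌ = S_ř B y̌ (noiseless unlabeled measurements). Let (r^t)_{t≥1} be ordered selections and (y^t)_{t≥1} vectors in ℝ^k generated by alternating minimization: for each t, y^t minimizes y ↦ ‖S_{r^t} B y − x̌‖ over ℝ^k, and r^{t+1} minimizes r ↦ ‖S_r B y^t − x̌‖ over all ordered selections. Set ς = √((1+δ)/(1−δ)) and ν_min = (1 − ς² + 2√(ς²−1)) / (1 + ς² − 2√(ς²−1)). If c(r¹, ř)/m > ν_min, then lim_{t→∞} ‖y^t − y̌‖ = 0. -/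

import Mathlib

open Filter

/-- Apply the ordered-selection sampling: `(S_r B y) i = ⟨B_{r i}, y⟩`. -/
noncomputable def selApply {n k m : ℕ} (B : Matrix (Fin n) (Fin k) ℝ) (r : Fin m → Fin n)
    (y : EuclideanSpace ℝ (Fin k)) : EuclideanSpace ℝ (Fin m) :=
  WithLp.toLp 2 (fun i => ∑ j, B (r i) j * y j)

/-- Similarity count `c(r,r') = #{i : r i = r' i}`. -/
def simCount {n m : ℕ} (r r' : Fin m → Fin n) : ℕ :=
  (Finset.univ.filter (fun i => r i = r' i)).card

/-- Distance `d((y,r),(y',r')) = √(m‖y‖² + m‖y'‖² − 2 c(r,r') ⟨y,y'⟩)`. -/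
noncomputable def selDist {n k m : ℕ} (y y' : EuclideanSpace ℝ (Fin k))
    (r r' : Fin m → Fin n) : ℝ :=
  Real.sqrt ((m : ℝ) * ‖y‖ ^ 2 + (m : ℝ) * ‖y'‖ ^ 2
    - 2 * (simCount r r' : ℝ) * (inner ℝ y y' : ℝ))

lemma simCount_le {n m : ℕ} (r r' : Fin m → Fin n) : simCount r r' ≤ m := by
  classical
  calc simCount r r' ≤ Finset.univ.card := Finset.card_filter_le _ _
    _ = m := by simp

lemma simCount_self {n m : ℕ} (r : Fin m → Fin n) : simCount r r = m := by
  simp [simCount]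

lemma eq_of_simCount {n m : ℕ} {r r' : Fin m → Fin n} (h : simCount r r' = m) : r = r' := by
  classical
  have huniv : Finset.univ.filter (fun i => r i = r' i) = Finset.univ :=
    Finset.eq_univ_of_card _ (by simpa [simCount] using h)
  funext i
  have hi : i ∈ Finset.univ.filter (fun i => r i = r' i) := by
    rw [huniv]; exact Finset.mem_univ i
  exact (Finset.mem_filter.mp hi).2

lemma selDist_expr_nonneg {n k m : ℕ} (y y' : EuclideanSpace ℝ (Fin k))
    (r r' : Fin m → Fin n) :
    0 ≤ (m : ℝ) * ‖y‖ ^ 2 + (m : ℝ) * ‖y'‖ ^ 2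
      - 2 * (simCount r r' : ℝ) * (inner ℝ y y' : ℝ) := by
  have hcs : (inner ℝ y y' : ℝ) ≤ ‖y‖ * ‖y'‖ := real_inner_le_norm y y'
  have hc0 : (0:ℝ) ≤ (simCount r r' : ℝ) := Nat.cast_nonneg _
  have hcm : (simCount r r' : ℝ) ≤ (m : ℝ) := by exact_mod_cast simCount_le r r'
  have h1 : (simCount r r' : ℝ) * (inner ℝ y y' : ℝ) ≤ (simCount r r' : ℝ) * (‖y‖ * ‖y'‖) :=
    mul_le_mul_of_nonneg_left hcs hc0
  have h2 : (simCount r r' : ℝ) * (‖y‖ * ‖y'‖) ≤ (m : ℝ) * (‖y‖ * ‖y'‖) :=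
    mul_le_mul_of_nonneg_right hcm (mul_nonneg (norm_nonneg _) (norm_nonneg _))
  nlinarith [h1, h2, mul_nonneg (Nat.cast_nonneg (α := ℝ) m) (sq_nonneg (‖y‖ - ‖y'‖))]

lemma selDist_sq {n k m : ℕ} (y y' : EuclideanSpace ℝ (Fin k)) (r r' : Fin m → Fin n) :
    selDist y y' r r' ^ 2 = (m : ℝ) * ‖y‖ ^ 2 + (m : ℝ) * ‖y'‖ ^ 2
      - 2 * (simCount r r' : ℝ) * (inner ℝ y y' : ℝ) :=
  Real.sq_sqrt (selDist_expr_nonneg y y' r r')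

set_option maxHeartbeats 1000000 in
lemma key_arith (m ρ2 δ w Y I c c' : ℝ)
    (hm : 0 < m) (hρ : 0 < ρ2) (hδ0 : 0 < δ) (hδ1 : δ < 1/3)
    (hw : (1 - δ) * (1 + w ^ 2) = 1 + δ) (hw0 : 0 < w) (hw1 : w < 1)
    (hc0 : 0 ≤ c) (hcm : c < m) (hc'm : c' ≤ m)
    (hY0 : 0 ≤ Y)
    (hCS : I ^ 2 ≤ Y * ρ2)
    (h1 : (m + c) * (1 - w) ^ 2 > m - c)
    (hA : (1 - δ) * (m^2*Y + m^2*ρ2 - 2*c*m*I) ≤ (1 + δ) * (m^2*ρ2 - c^2*ρ2))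
    (hB : (1 - δ) * (m*Y + m*ρ2 - 2*c'*I) ≤ (1 + δ) * (m*Y + m*ρ2 - 2*m*I)) :
    c < c' := by
  have h1δ : 0 < 1 - δ := by linarith
  have hA2 : m^2*Y + m^2*ρ2 - 2*c*m*I ≤ (1 + w^2) * (m^2*ρ2 - c^2*ρ2) := by
    have h : (1-δ) * (m^2*Y + m^2*ρ2 - 2*c*m*I) ≤ (1-δ) * ((1 + w^2) * (m^2*ρ2 - c^2*ρ2)) := by
      calc (1-δ) * (m^2*Y + m^2*ρ2 - 2*c*m*I) ≤ (1 + δ) * (m^2*ρ2 - c^2*ρ2) := hA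
        _ = (1-δ) * ((1 + w^2) * (m^2*ρ2 - c^2*ρ2)) := by rw [← hw]; ring
    exact le_of_mul_le_mul_left h h1δ
  have hB2 : m*Y + m*ρ2 - 2*c'*I ≤ (1 + w^2) * (m*Y + m*ρ2 - 2*m*I) := by
    have h : (1-δ) * (m*Y + m*ρ2 - 2*c'*I) ≤ (1-δ) * ((1 + w^2) * (m*Y + m*ρ2 - 2*m*I)) := by
      calc (1-δ) * (m*Y + m*ρ2 - 2*c'*I) ≤ (1 + δ) * (m*Y + m*ρ2 - 2*m*I) := hB
        _ = (1-δ) * ((1 + w^2) * (m*Y + m*ρ2 - 2*m*I)) := by rw [← hw]; ring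
    exact le_of_mul_le_mul_left h h1δ
  have hpq1 : 0 < (m + c) * (1 - w)^2 - (m - c) := by linarith
  have hpq2 : 0 < (m + c) * (1 + w)^2 - (m - c) := by
    nlinarith [mul_nonneg (show (0:ℝ) ≤ m + c by linarith)
      (show (0:ℝ) ≤ (1+w)^2 - 1 by nlinarith [hw0])]
  have hK0 : 0 < 2*c - w^2*(m + c) := by
    nlinarith [hpq1, mul_pos (show (0:ℝ) < m + c by linarith)
      (mul_pos hw0 (show (0:ℝ) < 1 - w by linarith))]
  have hK2 : 4*w^2*(m - c)*(m + c) < (2*c - w^2*(m + c))^2 := by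
    nlinarith [mul_pos hpq1 hpq2]
  have hI : w^2*(m + c)*ρ2 < 2*m*I := by
    by_contra hcon
    push_neg at hcon
    have hsq : (m*I - c*ρ2)^2 ≤ w^2*(m^2 - c^2)*ρ2^2 := by
      have p1 := mul_le_mul_of_nonneg_right hA2 hρ.le
      have p2 := mul_le_mul_of_nonneg_left hCS (show (0:ℝ) ≤ m^2 by positivity)
      nlinarith [p1, p2]
    have h5 : ρ2*(2*c - w^2*(m + c)) ≤ 2*(c*ρ2 - m*I) := by nlinarith [hcon]
    have h5' : 0 ≤ ρ2*(2*c - w^2*(m + c)) := le_of_lt (mul_pos hρ hK0)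
    have h6 : (ρ2*(2*c - w^2*(m + c)))^2 ≤ (2*(c*ρ2 - m*I))^2 := pow_le_pow_left₀ h5' h5 2
    nlinarith [h6, hsq, hK2, mul_pos hρ hρ]
  by_contra hc'
  push_neg at hc'
  have hI0 : 0 < I := by
    nlinarith [hI, mul_pos (mul_pos (pow_pos hw0 2) (show (0:ℝ) < m + c by linarith)) hρ, hm]
  have hE : m*(m*Y + m*ρ2 - 2*m*I) ≤ (1 + w^2)*(m^2*ρ2 - c^2*ρ2) - 2*m*(m - c)*I := by
    linarith [hA2]
  have hB3 : 2*(m - c')*I ≤ w^2*(m*Y + m*ρ2 - 2*m*I) := by linarith [hB2]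
  have h7a := mul_le_mul_of_nonneg_left hB3 hm.le
  have h7b := mul_le_mul_of_nonneg_left hE (sq_nonneg w)
  have h8 : 0 ≤ 2*m*(c - c')*I :=
    mul_nonneg (mul_nonneg (mul_nonneg (by norm_num) hm.le) (by linarith)) hI0.le
  have h9 : (1 + w^2)*(m - c)*(2*m*I - w^2*(m + c)*ρ2) ≤ 0 := by linarith [h7a, h7b, h8]
  have h10 : 0 < (1 + w^2)*(m - c)*(2*m*I - w^2*(m + c)*ρ2) :=
    mul_pos (mul_pos (by positivity) (by linarith)) (by linarith [hI])
  linarith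

lemma thresh_helper (mR w ct : ℝ) (hD : (0:ℝ) < 2 - 2*w + w^2)
    (hν : (2*w - w^2) / (2 - 2*w + w^2) * mR < ct) :
    (mR + ct) * (1 - w)^2 > mR - ct := by
  rw [div_mul_eq_mul_div, div_lt_iff₀ hD] at hν
  nlinarith [hν]

set_option maxHeartbeats 1000000 in
/-- Theorem 2 (noiseless case): convergence of alternating minimization. -/
theorem altmin_noiseless_convergence {n k m : ℕ} (hm : 0 < m) (hmn : m ≤ n)
    (B : Matrix (Fin n) (Fin k) ℝ) (δ : ℝ) (hδ0 : 0 < δ) (hδ1 : δ < 1 / 3)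
    (hRRIP : ∀ (y y' : EuclideanSpace ℝ (Fin k)) (r r' : Fin m → Fin n),
      StrictMono r → StrictMono r' →
      (1 - δ) * (selDist y y' r r') ^ 2 ≤ ‖selApply B r y - selApply B r' y'‖ ^ 2 ∧
      ‖selApply B r y - selApply B r' y'‖ ^ 2 ≤ (1 + δ) * (selDist y y' r r') ^ 2)
    (ychk : EuclideanSpace ℝ (Fin k)) (hychk : ychk ≠ 0)
    (rchk : Fin m → Fin n) (hrchk : StrictMono rchk)
    (xchk : EuclideanSpace ℝ (Fin m)) (hxchk : xchk = selApply B rchk ychk)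
    (r : ℕ → Fin m → Fin n) (y : ℕ → EuclideanSpace ℝ (Fin k))
    (hmono : ∀ t, 1 ≤ t → StrictMono (r t))
    (hYstep : ∀ t, 1 ≤ t → ∀ y' : EuclideanSpace ℝ (Fin k),
      ‖selApply B (r t) (y t) - xchk‖ ≤ ‖selApply B (r t) y' - xchk‖)
    (hSstep : ∀ t, 1 ≤ t → ∀ s : Fin m → Fin n, StrictMono s →
      ‖selApply B (r (t + 1)) (y t) - xchk‖ ≤ ‖selApply B s (y t) - xchk‖)
    (ς : ℝ) (hς : ς = Real.sqrt ((1 + δ) / (1 - δ)))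
    (νmin : ℝ)
    (hνmin : νmin = (1 - ς ^ 2 + 2 * Real.sqrt (ς ^ 2 - 1))
      / (1 + ς ^ 2 - 2 * Real.sqrt (ς ^ 2 - 1)))
    (hinit : (simCount (r 1) rchk : ℝ) / m > νmin) :
    Tendsto (fun t => ‖y t - ychk‖) atTop (nhds 0) := by
  have hm' : (0:ℝ) < m := by exact_mod_cast hm
  have h1δ : 0 < 1 - δ := by linarith
  have hρ : (0:ℝ) < ‖ychk‖ ^ 2 := by
    have : 0 < ‖ychk‖ := norm_pos_iff.mpr hychk
    positivity
  have hςsq : ς ^ 2 = (1 + δ) / (1 - δ) := by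
    rw [hς]; exact Real.sq_sqrt (div_nonneg (by linarith) (by linarith))
  have hu0 : 0 < ς ^ 2 - 1 := by
    rw [hςsq]
    have : (1:ℝ) < (1 + δ) / (1 - δ) := (one_lt_div h1δ).mpr (by linarith)
    linarith
  have hu1 : ς ^ 2 - 1 < 1 := by
    rw [hςsq]
    have : (1 + δ) / (1 - δ) < 2 := (div_lt_iff₀ h1δ).mpr (by linarith)
    linarith
  set w := Real.sqrt (ς ^ 2 - 1) with hwdef
  have hwsq : w ^ 2 = ς ^ 2 - 1 := Real.sq_sqrt hu0.le
  have hw0 : 0 < w := Real.sqrt_pos.mpr hu0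
  have hw1 : w < 1 := by nlinarith [hwsq, hu1, hw0]
  have hw' : (1 - δ) * (1 + w ^ 2) = 1 + δ := by
    rw [hwsq, hςsq]; field_simp; ring
  have hνminw : νmin = (2*w - w^2) / (2 - 2*w + w^2) := by
    have hς2 : ς ^ 2 = 1 + w ^ 2 := by linarith [hwsq]
    rw [hνmin, hς2]; congr 1 <;> ring
  have hD : (0:ℝ) < 2 - 2*w + w^2 := by nlinarith [sq_nonneg (1 - w)]
  have hνmin0 : 0 < νmin := by
    rw [hνminw]; exact div_pos (by nlinarith [hw0, hw1]) hD
  have hνlt1 : νmin < 1 :=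
    lt_of_lt_of_le hinit ((div_le_one hm').mpr (by exact_mod_cast simCount_le (r 1) rchk))
  have hinit' : νmin * m < (simCount (r 1) rchk : ℝ) := (lt_div_iff₀ hm').mp hinit
  -- exact case: when the selection is fully recovered
  have exactCase : ∀ t, 1 ≤ t → simCount (r t) rchk = m →
      y t = ychk ∧ simCount (r (t+1)) rchk = m := by
    intro t ht hceq
    have hre : r t = rchk := eq_of_simCount hceq
    have hy : y t = ychk := by
      have hmid := hYstep t ht ychk
      rw [hxchk, hre] at hmid
      have hz : ‖selApply B rchk (y t) - selApply B rchk ychk‖ = 0 :=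
        le_antisymm (by simpa using hmid) (norm_nonneg _)
      have hlow := (hRRIP (y t) ychk rchk rchk hrchk hrchk).1
      rw [selDist_sq, simCount_self] at hlow
      have hz2 : ‖selApply B rchk (y t) - selApply B rchk ychk‖ ^ 2 = 0 := by
        rw [hz]; norm_num
      rw [hz2] at hlow
      have hexp : (m:ℝ) * ‖y t‖ ^ 2 + (m:ℝ) * ‖ychk‖ ^ 2
          - 2 * (m:ℝ) * (inner ℝ (y t) ychk : ℝ) = (m:ℝ) * ‖y t - ychk‖ ^ 2 := by
        rw [norm_sub_sq_real]; ring
      rw [hexp] at hlow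
      have hsq0 : ‖y t - ychk‖ ^ 2 ≤ 0 := by
        nlinarith [hlow, mul_pos h1δ hm', sq_nonneg ‖y t - ychk‖]
      have : ‖y t - ychk‖ = 0 := by nlinarith [norm_nonneg (y t - ychk), hsq0]
      exact sub_eq_zero.mp (norm_eq_zero.mp this)
    refine ⟨hy, ?_⟩
    have hmid' := hSstep t ht rchk hrchk
    rw [hxchk, hy] at hmid'
    have hz' : ‖selApply B (r (t+1)) ychk - selApply B rchk ychk‖ = 0 :=
      le_antisymm (by simpa using hmid') (norm_nonneg _)
    have hlow' := (hRRIP ychk ychk (r (t+1)) rchk (hmono (t+1) (by omega)) hrchk).1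
    rw [selDist_sq, real_inner_self_eq_norm_sq] at hlow'
    have hz2' : ‖selApply B (r (t+1)) ychk - selApply B rchk ychk‖ ^ 2 = 0 := by
      rw [hz']; norm_num
    rw [hz2'] at hlow'
    have hle : (m:ℝ) ≤ (simCount (r (t+1)) rchk : ℝ) := by
      nlinarith [hlow', mul_pos h1δ hρ]
    have : m ≤ simCount (r (t+1)) rchk := by exact_mod_cast hle
    exact le_antisymm (simCount_le _ _) this
  -- growth case
  have growCase : ∀ t, 1 ≤ t → νmin * m < (simCount (r t) rchk : ℝ) →
      simCount (r t) rchk < m → simCount (r t) rchk < simCount (r (t+1)) rchk := by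
    intro t ht hν hlt
    set ct : ℝ := (simCount (r t) rchk : ℝ) with hct
    set ct' : ℝ := (simCount (r (t+1)) rchk : ℝ) with hct'
    set lam : ℝ := ct / m with hlam
    set It : ℝ := (inner ℝ (y t) ychk : ℝ) with hIt
    have hmono_t := hmono t ht
    -- L1 (y-step)
    have hlow := (hRRIP (y t) ychk (r t) rchk hmono_t hrchk).1
    have hupp := (hRRIP (lam • ychk) ychk (r t) rchk hmono_t hrchk).2
    have hmid := hYstep t ht (lam • ychk)
    rw [hxchk] at hmid
    have hmid2 := pow_le_pow_left₀ (norm_nonneg _) hmid 2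
    rw [selDist_sq] at hlow hupp
    have e1 : ‖lam • ychk‖ ^ 2 = lam ^ 2 * ‖ychk‖ ^ 2 := by
      rw [norm_smul, Real.norm_eq_abs, mul_pow, sq_abs]
    have e2 : (inner ℝ (lam • ychk) ychk : ℝ) = lam * ‖ychk‖ ^ 2 := by
      rw [real_inner_smul_left, real_inner_self_eq_norm_sq]
    rw [e1, e2] at hupp
    have chain : (1 - δ) * ((m:ℝ) * ‖y t‖ ^ 2 + (m:ℝ) * ‖ychk‖ ^ 2 - 2 * ct * It)
        ≤ (1 + δ) * ((m:ℝ) * (lam ^ 2 * ‖ychk‖ ^ 2) + (m:ℝ) * ‖ychk‖ ^ 2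
          - 2 * ct * (lam * ‖ychk‖ ^ 2)) :=
      le_trans hlow (le_trans hmid2 hupp)
    have hlm2 : lam * m = ct := div_mul_cancel₀ _ (ne_of_gt hm')
    have hA : (1 - δ) * ((m:ℝ)^2 * ‖y t‖^2 + (m:ℝ)^2 * ‖ychk‖^2 - 2*ct*m*It)
        ≤ (1 + δ) * ((m:ℝ)^2 * ‖ychk‖^2 - ct^2 * ‖ychk‖^2) := by
      have h3 := mul_le_mul_of_nonneg_right chain hm'.le
      have e3 : ((1 + δ) * ((m:ℝ) * (lam ^ 2 * ‖ychk‖ ^ 2) + (m:ℝ) * ‖ychk‖ ^ 2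
          - 2 * ct * (lam * ‖ychk‖ ^ 2))) * m
          = (1 + δ) * ((m:ℝ)^2 * ‖ychk‖^2 - ct^2 * ‖ychk‖^2) := by
        linear_combination (1 + δ) * ‖ychk‖ ^ 2 * (lam * m - ct) * hlm2
      calc (1 - δ) * ((m:ℝ)^2 * ‖y t‖^2 + (m:ℝ)^2 * ‖ychk‖^2 - 2*ct*m*It)
          = ((1 - δ) * ((m:ℝ) * ‖y t‖ ^ 2 + (m:ℝ) * ‖ychk‖ ^ 2 - 2 * ct * It)) * m := by ring
        _ ≤ ((1 + δ) * ((m:ℝ) * (lam ^ 2 * ‖ychk‖ ^ 2) + (m:ℝ) * ‖ychk‖ ^ 2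
            - 2 * ct * (lam * ‖ychk‖ ^ 2))) * m := h3
        _ = (1 + δ) * ((m:ℝ)^2 * ‖ychk‖^2 - ct^2 * ‖ychk‖^2) := e3
    -- L2 (r-step)
    have hlow2 := (hRRIP (y t) ychk (r (t+1)) rchk (hmono (t+1) (by omega)) hrchk).1
    have hupp2 := (hRRIP (y t) ychk rchk rchk hrchk hrchk).2
    have hmid' := hSstep t ht rchk hrchk
    rw [hxchk] at hmid'
    have hmid2' := pow_le_pow_left₀ (norm_nonneg _) hmid' 2
    rw [selDist_sq] at hlow2 hupp2
    rw [simCount_self] at hupp2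
    have hB : (1 - δ) * ((m:ℝ) * ‖y t‖^2 + (m:ℝ) * ‖ychk‖^2 - 2*ct'*It)
        ≤ (1 + δ) * ((m:ℝ) * ‖y t‖^2 + (m:ℝ) * ‖ychk‖^2 - 2*(m:ℝ)*It) := by
      have := le_trans hlow2 (le_trans hmid2' hupp2)
      calc (1 - δ) * ((m:ℝ) * ‖y t‖^2 + (m:ℝ) * ‖ychk‖^2 - 2*ct'*It)
          = (1 - δ) * ((m:ℝ) * ‖y t‖^2 + (m:ℝ) * ‖ychk‖^2 - 2*ct'*It) := rfl
        _ ≤ (1 + δ) * ((m:ℝ) * ‖y t‖^2 + (m:ℝ) * ‖ychk‖^2 - 2*(m:ℝ)*It) := by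
            convert this using 2 <;> ring
    -- Cauchy–Schwarz
    have hCS : It ^ 2 ≤ ‖y t‖^2 * ‖ychk‖^2 := by
      have h := abs_real_inner_le_norm (y t) ychk
      have h2 := pow_le_pow_left₀ (abs_nonneg _) h 2
      rw [sq_abs] at h2
      calc It ^ 2 ≤ (‖y t‖ * ‖ychk‖) ^ 2 := h2
        _ = ‖y t‖^2 * ‖ychk‖^2 := by ring
    -- threshold condition
    have h1 : ((m:ℝ) + ct) * (1 - w)^2 > (m:ℝ) - ct := by
      rw [hνminw] at hν
      exact thresh_helper (m:ℝ) w ct hD hν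
    have hcm : ct < (m:ℝ) := by rw [hct]; exact_mod_cast hlt
    have hc'm : ct' ≤ (m:ℝ) := by rw [hct']; exact_mod_cast simCount_le (r (t+1)) rchk
    have hres : ct < ct' :=
      key_arith (m:ℝ) (‖ychk‖^2) δ w (‖y t‖^2) It ct ct' hm' hρ hδ0 hδ1 hw' hw0 hw1
        (by rw [hct]; exact Nat.cast_nonneg _) hcm hc'm (sq_nonneg _) hCS h1 hA hB
    rw [hct, hct'] at hres
    exact_mod_cast hres
  -- induction invariant
  have inv : ∀ j : ℕ, νmin * m < (simCount (r (1+j)) rchk : ℝ) ∧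
      min (simCount (r 1) rchk + j) m ≤ simCount (r (1+j)) rchk := by
    intro j
    induction j with
    | zero =>
      refine ⟨by simpa using hinit', ?_⟩
      have := simCount_le (r 1) rchk
      simp only [Nat.add_zero]
      omega
    | succ j ih =>
      have ht : 1 ≤ 1 + j := by omega
      have hidx : 1 + (j + 1) = (1 + j) + 1 := by omega
      rcases eq_or_lt_of_le (simCount_le (r (1+j)) rchk) with heq | hlt
      · obtain ⟨-, h2⟩ := exactCase (1+j) ht heq
        rw [hidx]
        constructor
        · rw [h2]; nlinarith [hνlt1, hm']
        · rw [h2]; exact min_le_right _ _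
      · have hgrow := growCase (1+j) ht ih.1 hlt
        rw [hidx]
        constructor
        · have : (simCount (r (1+j)) rchk : ℝ) ≤ (simCount (r ((1+j)+1)) rchk : ℝ) := by
            exact_mod_cast le_of_lt hgrow
          linarith [ih.1]
        · have h2 := ih.2
          omega
  have hC1pos : 1 ≤ simCount (r 1) rchk := by
    have h0 : (0:ℝ) < (simCount (r 1) rchk : ℝ) := lt_trans (mul_pos hνmin0 hm') hinit'
    have : 0 < simCount (r 1) rchk := by exact_mod_cast h0
    omega
  have hfin : ∀ t, m ≤ t → y t = ychk := by
    intro t htm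
    have ht1 : 1 ≤ t := le_trans hm htm
    obtain ⟨j, hj⟩ : ∃ j, t = 1 + j := ⟨t - 1, by omega⟩
    subst hj
    have h2 := (inv j).2
    have hCle := simCount_le (r (1+j)) rchk
    have hceq : simCount (r (1+j)) rchk = m := by omega
    exact (exactCase (1+j) (by omega) hceq).1
  have hev : (fun t => ‖y t - ychk‖) =ᶠ[atTop] (fun _ => (0:ℝ)) := by
    filter_upwards [eventually_ge_atTop m] with t ht
    rw [hfin t ht, sub_self, norm_zero]
  exact Filter.Tendsto.congr' hev.symm tendsto_const_nhds
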